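/- With filter coefficients a = c = -ν/2, b = ν (ν ≠ 2), the induced two-step method satisfies the second-order condition (1/2)α₂ + (1/2)α₀ - β₂ + β₀ = 0 if and only if ν = 2/3. -/

import Mathlib

/-- For the backward Euler plus filter method the second-order condition
holds iff `ν = 2/3`. -/
theorem stmt_4 (ν : ℝ) (hν : ν ≠ 2) :
    let α₂ := 1 / (1 - ν / 2)
    let α₀ := (ν / 2) / (1 - ν / 2)
    let β₂ := 1 / (1 - ν / 2)
    let β₀ := (ν / 2) / (1 - ν / 2)
    ((1 / 2) * α₂ + (1 / 2) * α₀ - β₂ + β₀ = 0) ↔ ν = 2 / 3 := by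
  have h : 1 - ν / 2 ≠ 0 := by intro h; apply hν; linarith
  simp only
  constructor
  · intro h1
    have h2 : (2:ℝ) - ν ≠ 0 := sub_ne_zero.mpr (Ne.symm hν)
    field_simp [h2] at h1
    have h3 : (2 - ν)^2 * (3*ν - 2) = 0 := by linear_combination (2 - ν)^2 * h1
    rcases mul_eq_zero.mp h3 with h4 | h4
    · exact absurd (pow_eq_zero_iff (by norm_num) |>.mp h4) h2
    · linarith
  · intro h1
    subst h1
    norm_num
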